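/- Let m ≥ 3 and n ≥ 3 both be even. Then the number of crossing tiles in a corner-connection knot mosaic with m rows and n columns is at most mn/2. -/

import Mathlib

/-- The eleven corner-connection tile types. -/
inductive Tile : Type
  | T0 | T1 | T2 | T3 | T4 | T5 | T6 | T7 | T8 | T9 | T10
  deriving DecidableEq

open Tile

/-- `cp t a b = true` iff tile `t` has a connection point at the corner of its cell
with vertical offset `a` (`false` = top, `true` = bottom) and horizontal offset `b`
(`false` = left, `true` = right).  `T0` is blank; `T1`–`T4` are the single-arc tiles
(connection points at the two corners of one side, the four sides in order top,
bottom, left, right); `T5`, `T6` are the diagonal segment tiles ({TL, BR} and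
{TR, BL}); `T7`–`T10` (double arcs and crossings) use all four corners. -/
def cp : Tile → Bool → Bool → Bool
  | T0, _, _ => false
  | T1, a, _ => !a
  | T2, a, _ => a
  | T3, _, b => !b
  | T4, _, b => b
  | T5, a, b => a == b
  | T6, a, b => a != b
  | _, _, _ => true

/-- Crossing tiles. -/
def isCrossing : Tile → Bool
  | T9 | T10 => true
  | _ => false

/-- Tiles with four connection points. -/
def isFourCP : Tile → Bool
  | T7 | T8 | T9 | T10 => true
  | _ => false

/-- Double-arc tiles. -/
def isDoubleArc : Tile → Bool
  | T7 | T8 => true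
  | _ => false

/-- The number of connection-point incidences at the grid vertex `(r, c)`:
the number of cells incident to this vertex whose tile has a connection point
at the corresponding corner.  (The cell incident to `(r, c)` via its corner
with offsets `(a, b)` is the cell `(r - a, c - b)`, which exists iff `a ≤ r`
and `b ≤ c`.) -/
def vertexCount (M : ℕ → ℕ → Tile) (r c : ℕ) : ℕ :=
  ∑ p : Bool × Bool,
    if p.1.toNat ≤ r ∧ p.2.toNat ≤ c ∧
        cp (M (r - p.1.toNat) (c - p.2.toNat)) p.1 p.2 = true
    then 1 else 0

/-- A corner-connection knot mosaic with `m` rows and `n` columns: a tiling of the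
`m × n` grid (cells outside the grid are blank) that is suitably connected with no
triple points, i.e. every vertex of the `(m+1) × (n+1)` grid of cell corners has
exactly 0 or 2 connection-point incidences. -/
def IsKnotMosaicRect (m n : ℕ) (M : ℕ → ℕ → Tile) : Prop :=
  (∀ i j, m ≤ i ∨ n ≤ j → M i j = Tile.T0) ∧
  (∀ r c, r ≤ m → c ≤ n → vertexCount M r c = 0 ∨ vertexCount M r c = 2)

/-- A corner-connection knot `n`-mosaic (square, `n` rows and `n` columns). -/
def IsKnotMosaic (n : ℕ) (M : ℕ → ℕ → Tile) : Prop :=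
  IsKnotMosaicRect n n M

/-- The number of crossing tiles in the `m × n` grid. -/
def crossingCountRect (m n : ℕ) (M : ℕ → ℕ → Tile) : ℕ :=
  ((Finset.range m ×ˢ Finset.range n).filter
    (fun p => isCrossing (M p.1 p.2) = true)).card

/-- The number of crossing tiles in the `n × n` grid. -/
def crossingCount (n : ℕ) (M : ℕ → ℕ → Tile) : ℕ :=
  crossingCountRect n n M

lemma cp_of_crossing {t : Tile} (h : isCrossing t = true) (a b : Bool) :
    cp t a b = true := by
  cases t <;> simp_all [isCrossing, cp]

/-- For `m, n ≥ 3` both even, a corner-connection knot mosaic with `m` rows and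
`n` columns has at most `m * n / 2` crossing tiles. -/
theorem max_crossings_rect_even_even
    (m n : ℕ) (hm : 3 ≤ m) (hn : 3 ≤ n) (hmpar : Even m) (hnpar : Even n)
    (M : ℕ → ℕ → Tile) (hM : IsKnotMosaicRect m n M) :
    crossingCountRect m n M ≤ m * n / 2 := by
  obtain ⟨a, ha⟩ := hmpar
  obtain ⟨b, hb⟩ := hnpar
  have ham : m = 2 * a := by omega
  have hbn : n = 2 * b := by omega
  set S := (Finset.range m ×ˢ Finset.range n).filter
    (fun p => isCrossing (M p.1 p.2) = true) with hS
  have hmaps : ∀ x ∈ S, (x.1 / 2, x.2 / 2) ∈ Finset.range a ×ˢ Finset.range b := by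
    intro x hx
    simp only [hS, Finset.mem_filter, Finset.mem_product, Finset.mem_range] at hx ⊢
    omega
  have hcard := Finset.card_eq_sum_card_fiberwise hmaps
  have hfib : ∀ t ∈ Finset.range a ×ˢ Finset.range b,
      (S.filter (fun x => (x.1 / 2, x.2 / 2) = t)).card ≤ 2 := by
    rintro ⟨u, v⟩ ht
    simp only [Finset.mem_product, Finset.mem_range] at ht
    have hvc := hM.2 (2*u+1) (2*v+1) (by omega) (by omega)
    have hv2 : vertexCount M (2*u+1) (2*v+1) ≤ 2 := by omega
    have hvcard : vertexCount M (2*u+1) (2*v+1) =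
        (Finset.univ.filter (fun p : Bool × Bool =>
          p.1.toNat ≤ 2*u+1 ∧ p.2.toNat ≤ 2*v+1 ∧
          cp (M (2*u+1 - p.1.toNat) (2*v+1 - p.2.toNat)) p.1 p.2 = true)).card := by
      rw [vertexCount, Finset.sum_boole]; simp
    rw [hvcard] at hv2
    refine le_trans ?_ hv2
    apply Finset.card_le_card_of_injOn
      (fun x => ((decide (x.1 = 2*u) : Bool), (decide (x.2 = 2*v) : Bool)))
    · intro x hx
      simp only [hS, Finset.mem_coe, Finset.mem_filter, Finset.mem_product, Finset.mem_range,
        Prod.mk.injEq] at hx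
      obtain ⟨⟨⟨h1, h2⟩, h3⟩, h4, h5⟩ := hx
      simp only [Finset.mem_coe, Finset.mem_filter, Finset.mem_univ, true_and]
      have hx1 : x.1 = 2*u ∨ x.1 = 2*u + 1 := by omega
      have hx2 : x.2 = 2*v ∨ x.2 = 2*v + 1 := by omega
      have e1 : 2*u+1 - (decide (x.1 = 2*u) : Bool).toNat = x.1 := by
        rcases hx1 with h | h <;> simp [h]
      have e2 : 2*v+1 - (decide (x.2 = 2*v) : Bool).toNat = x.2 := by
        rcases hx2 with h | h <;> simp [h]
      refine ⟨by cases (decide (x.1 = 2*u) : Bool) <;> simp,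
              by cases (decide (x.2 = 2*v) : Bool) <;> simp, ?_⟩
      rw [e1, e2]
      exact cp_of_crossing h3 _ _
    · intro x hx y hy hxy
      simp only [hS, Finset.mem_coe, Finset.mem_filter, Finset.mem_product,
        Finset.mem_range, Prod.mk.injEq] at hx hy
      obtain ⟨⟨⟨hx1, hx2⟩, _⟩, hx4, hx5⟩ := hx
      obtain ⟨⟨⟨hy1, hy2⟩, _⟩, hy4, hy5⟩ := hy
      simp only [Prod.mk.injEq, decide_eq_decide] at hxy
      have : x.1 = y.1 := by omega
      have : x.2 = y.2 := by omega
      exact Prod.ext ‹x.1 = y.1› ‹x.2 = y.2›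
  have hsum : ∑ t ∈ Finset.range a ×ˢ Finset.range b,
      (S.filter (fun x => (x.1 / 2, x.2 / 2) = t)).card ≤ 2 * (a * b) := by
    calc _ ≤ ∑ _t ∈ Finset.range a ×ˢ Finset.range b, 2 := Finset.sum_le_sum hfib
    _ = 2 * (a * b) := by
      simp [Finset.sum_const, Finset.card_product, Finset.card_range]; ring
  have hdiv : m * n / 2 = 2 * (a * b) := by
    have hmn : m * n = 2 * (2 * (a * b)) := by subst ham hbn; ring
    omega
  rw [crossingCountRect, ← hS, hcard, hdiv]
  exact hsum
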